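/- Let H be a Hamiltonian on n qubits with 0 ≤ H ≤ t·I, and define the channel Φ(ρ) = Tr((H/t ⊗ I)ρ)·μ_Q + Tr(((I − H/t) ⊗ I)ρ)·|⊥⟩⟨⊥| on L(Q^{⊗(n+1)}) with outputs in L(Q_⊥). If there exists |ψ⟩ with ⟨ψ|H|ψ⟩ ≤ α, then the orthogonal states ρ = |ψ⟩⟨ψ|⊗|0⟩⟨0| and σ = |ψ⟩⟨ψ|⊗|1⟩⟨1| satisfy Tr(Φ(ρ)Φ(σ)) ≥ 1 − 2α/t. Conversely, if ⟨ψ|H|ψ⟩ ≥ β for all unit |ψ⟩, then Tr(Φ(τ)²) ≤ 1 − β/(2t) for every density operator τ, and hence Tr(Φ(ρ)Φ(σ)) ≤ 1 − β/(2t) for every pair of density operators ρ, σ. -/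

import Mathlib

open Matrix BigOperators ComplexOrder Kronecker

/-- A density operator: positive semidefinite with trace 1. -/
def IsDensity {ι : Type*} [Fintype ι] (ρ : Matrix ι ι ℂ) : Prop :=
  ρ.PosSemidef ∧ ρ.trace = 1

/-- The outer product `|ψ⟩⟨ψ|`. -/
noncomputable def outer {ι : Type*} [Fintype ι] (ψ : ι → ℂ) : Matrix ι ι ℂ :=
  Matrix.vecMulVec ψ (star ψ)

/-- The channel `Φ(ρ) = Tr((H/t ⊗ I)ρ)·μ_Q + Tr(((I − H/t) ⊗ I)ρ)·|⊥⟩⟨⊥|` built from a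
Hamiltonian `H`, as an operator on `L(Q^{⊗n} ⊗ Q)` with values in `L(Q_⊥)`, where
`Q_⊥ = ℂ³` has basis `|0⟩, |1⟩, |⊥⟩` and `μ_Q = I/2` on the span of `|0⟩, |1⟩`. -/
noncomputable def PhiH {N : ℕ} (t : ℝ) (Hm : Matrix (Fin N) (Fin N) ℂ)
    (ρ : Matrix (Fin N × Fin 2) (Fin N × Fin 2) ℂ) : Matrix (Fin 3) (Fin 3) ℂ :=
  Matrix.diagonal
    ![((Hm ⊗ₖ (1 : Matrix (Fin 2) (Fin 2) ℂ)) * ρ).trace / ((2 * t : ℝ) : ℂ),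
      ((Hm ⊗ₖ (1 : Matrix (Fin 2) (Fin 2) ℂ)) * ρ).trace / ((2 * t : ℝ) : ℂ),
      1 - ((Hm ⊗ₖ (1 : Matrix (Fin 2) (Fin 2) ℂ)) * ρ).trace / ((t : ℝ) : ℂ)]

lemma psd_diag_nonneg {n : Type*} [Fintype n] [DecidableEq n] {A : Matrix n n ℂ}
    (hA : A.PosSemidef) (i : n) : 0 ≤ A i i := by
  have := hA.dotProduct_mulVec_nonneg (Pi.single i 1)
  simpa [dotProduct, Matrix.mulVec, Pi.single_apply] using this

lemma psd_trace_nonneg {n : Type*} [Fintype n] [DecidableEq n] {A : Matrix n n ℂ}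
    (hA : A.PosSemidef) : 0 ≤ A.trace :=
  Finset.sum_nonneg fun i _ => psd_diag_nonneg hA i

lemma psd_trace_mul_nonneg {n : Type*} [Fintype n] [DecidableEq n] {A B : Matrix n n ℂ}
    (hA : A.PosSemidef) (hB : B.PosSemidef) : 0 ≤ (A * B).trace := by
  obtain ⟨C, rfl⟩ : ∃ C : Matrix n n ℂ, A = Cᴴ * C := by
    open scoped MatrixOrder in exact CStarAlgebra.nonneg_iff_eq_star_mul_self.mp hA.nonneg
  rw [Matrix.mul_assoc, Matrix.trace_mul_comm]
  exact psd_trace_nonneg (hB.mul_mul_conjTranspose_same C)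

lemma kron_conjTranspose {m n : Type*} (A : Matrix m m ℂ) (B : Matrix n n ℂ) :
    (A ⊗ₖ B)ᴴ = Aᴴ ⊗ₖ Bᴴ := by
  ext ⟨i, j⟩ ⟨k, l⟩
  simp [Matrix.conjTranspose_apply, Matrix.kroneckerMap_apply]

lemma psd_kron {m n : Type*} [Fintype m] [Fintype n] {A : Matrix m m ℂ} {B : Matrix n n ℂ}
    (hA : A.PosSemidef) (hB : B.PosSemidef) : (A ⊗ₖ B).PosSemidef := by
  obtain ⟨C, rfl⟩ : ∃ C : Matrix m m ℂ, A = Cᴴ * C := by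
    classical
    open scoped MatrixOrder in exact CStarAlgebra.nonneg_iff_eq_star_mul_self.mp hA.nonneg
  obtain ⟨D, rfl⟩ : ∃ D : Matrix n n ℂ, B = Dᴴ * D := by
    classical
    open scoped MatrixOrder in exact CStarAlgebra.nonneg_iff_eq_star_mul_self.mp hB.nonneg
  rw [Matrix.mul_kronecker_mul, ← kron_conjTranspose]
  exact Matrix.posSemidef_conjTranspose_mul_self _

lemma sub_kron {l m n p : Type*} (A B : Matrix l m ℂ) (C : Matrix n p ℂ) :
    (A - B) ⊗ₖ C = A ⊗ₖ C - B ⊗ₖ C := by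
  ext ⟨i, j⟩ ⟨k, l'⟩
  simp [Matrix.kroneckerMap_apply, sub_mul]

lemma psd_one {n : Type*} [Fintype n] [DecidableEq n] : (1 : Matrix n n ℂ).PosSemidef := by
  simpa using Matrix.posSemidef_conjTranspose_mul_self (1 : Matrix n n ℂ)

lemma trace_mul_outer {n : Type*} [Fintype n] (A : Matrix n n ℂ) (v : n → ℂ) :
    (A * outer v).trace = star v ⬝ᵥ A *ᵥ v := by
  simp only [outer, Matrix.trace, Matrix.diag, Matrix.mul_apply, Matrix.vecMulVec_apply,
    dotProduct, Matrix.mulVec, Finset.mul_sum, Pi.star_apply]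
  exact Finset.sum_congr rfl fun i _ => Finset.sum_congr rfl fun j _ => by ring

lemma trace_outer {n : Type*} [Fintype n] (v : n → ℂ) :
    (outer v).trace = star v ⬝ᵥ v := by
  simp only [outer, Matrix.trace, Matrix.diag, Matrix.vecMulVec_apply, dotProduct, Pi.star_apply]
  exact Finset.sum_congr rfl fun i _ => by ring

lemma phi_trace {N : ℕ} (t : ℝ) (Hm : Matrix (Fin N) (Fin N) ℂ)
    (ρ σ : Matrix (Fin N × Fin 2) (Fin N × Fin 2) ℂ) (x y : ℝ)
    (hx : ((Hm ⊗ₖ (1 : Matrix (Fin 2) (Fin 2) ℂ)) * ρ).trace = (x : ℂ))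
    (hy : ((Hm ⊗ₖ (1 : Matrix (Fin 2) (Fin 2) ℂ)) * σ).trace = (y : ℂ)) :
    ((PhiH t Hm ρ * PhiH t Hm σ).trace).re =
      (x/t)/2 * ((y/t)/2) + (x/t)/2 * ((y/t)/2) + (1 - x/t) * (1 - y/t) := by
  have : (PhiH t Hm ρ * PhiH t Hm σ).trace =
      (((x/t)/2 * ((y/t)/2) + (x/t)/2 * ((y/t)/2) + (1 - x/t) * (1 - y/t) : ℝ) : ℂ) := by
    rw [PhiH, PhiH, Matrix.diagonal_mul_diagonal, Matrix.trace_diagonal]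
    simp only [Fin.sum_univ_three, Pi.mul_apply, Matrix.cons_val_zero, Matrix.cons_val_one,
      Matrix.head_cons, Matrix.cons_val_two, Matrix.tail_cons, hx, hy]
    have ht' : ((2 * t : ℝ) : ℂ) = 2 * (t : ℂ) := by push_cast; ring
    push_cast
    ring
  rw [this, Complex.ofReal_re]

lemma ineq2 (c u v : ℝ) (hu0 : 0 ≤ u) (hu1 : u ≤ 1) (hcu : c ≤ u)
    (hv0 : 0 ≤ v) (hv1 : v ≤ 1) (hcv : c ≤ v) :
    u/2 * (v/2) + u/2 * (v/2) + (1 - u) * (1 - v) ≤ 1 - c/2 := by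
  nlinarith [mul_nonneg (sub_nonneg.2 hu1) (sub_nonneg.2 hv1),
    mul_nonneg (sub_nonneg.2 hcu) (sub_nonneg.2 hv1),
    mul_nonneg (sub_nonneg.2 hcv) (sub_nonneg.2 hu1),
    mul_nonneg hu0 hv0, mul_nonneg (sub_nonneg.2 hcu) hv0]

/-- Reduction from the local Hamiltonian problem to the clique problem: for `0 ≤ H ≤ t·I`,
if `⟨ψ|H|ψ⟩ ≤ α` then the orthogonal states `|ψ⟩⟨ψ|⊗|0⟩⟨0|` and `|ψ⟩⟨ψ|⊗|1⟩⟨1|` satisfy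
`Tr(Φ(ρ)Φ(σ)) ≥ 1 − 2α/t`; conversely, if `⟨ψ|H|ψ⟩ ≥ β` for all unit `|ψ⟩`, then
`Tr(Φ(τ)²) ≤ 1 − β/(2t)` for every density `τ`, and hence `Tr(Φ(ρ)Φ(σ)) ≤ 1 − β/(2t)` for
every pair of densities `ρ, σ`. -/
theorem hamiltonian_to_clique {N : ℕ} (t α β : ℝ) (ht : 0 < t)
    (Hm : Matrix (Fin N) (Fin N) ℂ) (hH : Hm.PosSemidef)
    (hHt : ((t : ℂ) • (1 : Matrix (Fin N) (Fin N) ℂ) - Hm).PosSemidef) :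
    (∀ ψ : Fin N → ℂ, star ψ ⬝ᵥ ψ = 1 → (star ψ ⬝ᵥ Hm *ᵥ ψ).re ≤ α →
      1 - 2 * α / t ≤
        ((PhiH t Hm (outer ψ ⊗ₖ outer (![1, 0] : Fin 2 → ℂ)) *
          PhiH t Hm (outer ψ ⊗ₖ outer (![0, 1] : Fin 2 → ℂ))).trace).re)
    ∧ ((∀ ψ : Fin N → ℂ, star ψ ⬝ᵥ ψ = 1 → β ≤ (star ψ ⬝ᵥ Hm *ᵥ ψ).re) →
        (∀ τ : Matrix (Fin N × Fin 2) (Fin N × Fin 2) ℂ, IsDensity τ →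
          ((PhiH t Hm τ * PhiH t Hm τ).trace).re ≤ 1 - β / (2 * t)) ∧
        (∀ ρ σ : Matrix (Fin N × Fin 2) (Fin N × Fin 2) ℂ, IsDensity ρ → IsDensity σ →
          ((PhiH t Hm ρ * PhiH t Hm σ).trace).re ≤ 1 - β / (2 * t))) := by
  constructor
  · -- completeness
    intro ψ hψ hα
    set q : ℂ := star ψ ⬝ᵥ Hm *ᵥ ψ with hqdef
    have hq0 : 0 ≤ q := hH.dotProduct_mulVec_nonneg ψ
    have hqim : q.im = 0 := ((Complex.le_def.mp hq0).2).symm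
    have hqre0 : 0 ≤ q.re := by simpa using (Complex.le_def.mp hq0).1
    have hqeq : q = ((q.re : ℝ) : ℂ) := by
      apply Complex.ext <;> simp [hqim]
    -- traces
    have htr : ∀ e : Fin 2 → ℂ, star e ⬝ᵥ e = 1 →
        ((Hm ⊗ₖ (1 : Matrix (Fin 2) (Fin 2) ℂ)) * (outer ψ ⊗ₖ outer e)).trace = ((q.re : ℝ) : ℂ) := by
      intro e he
      have h1 : (1 : Matrix (Fin 2) (Fin 2) ℂ) * outer e = outer e := one_mul _
      rw [← Matrix.mul_kronecker_mul, Matrix.trace_kronecker, h1, trace_mul_outer,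
        trace_outer, he, ← hqdef, mul_one, hqeq]
      simp
    have he0 : star (![1, 0] : Fin 2 → ℂ) ⬝ᵥ (![1, 0] : Fin 2 → ℂ) = 1 := by
      simp [dotProduct, Fin.sum_univ_two]
    have he1 : star (![0, 1] : Fin 2 → ℂ) ⬝ᵥ (![0, 1] : Fin 2 → ℂ) = 1 := by
      simp [dotProduct, Fin.sum_univ_two]
    rw [phi_trace t Hm _ _ q.re q.re (htr _ he0) (htr _ he1)]
    -- inequality
    have hxa : q.re / t ≤ α / t := (div_le_div_iff_of_pos_right ht).mpr hα
    have h2 : 1 - 2 * α / t = 1 - 2 * (α / t) := by ring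
    rw [h2]
    nlinarith [sq_nonneg (q.re / t)]
  · -- soundness
    intro hβ
    have key : ∀ τ : Matrix (Fin N × Fin 2) (Fin N × Fin 2) ℂ, IsDensity τ →
        ∃ x : ℝ, ((Hm ⊗ₖ (1 : Matrix (Fin 2) (Fin 2) ℂ)) * τ).trace = (x : ℂ) ∧
          0 ≤ x ∧ x ≤ t ∧ β ≤ x := by
      intro τ hτ
      set P : Matrix (Fin N × Fin 2) (Fin N × Fin 2) ℂ := Hm ⊗ₖ (1 : Matrix (Fin 2) (Fin 2) ℂ)
        with hPdef
      have hP : P.PosSemidef := psd_kron hH psd_one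
      set a : ℂ := (P * τ).trace with hadef
      have ha0 : 0 ≤ a := psd_trace_mul_nonneg hP hτ.1
      have haim : a.im = 0 := ((Complex.le_def.mp ha0).2).symm
      have hare0 : 0 ≤ a.re := by simpa using (Complex.le_def.mp ha0).1
      have haeq : a = ((a.re : ℝ) : ℂ) := by apply Complex.ext <;> simp [haim]
      refine ⟨a.re, haeq ▸ rfl, hare0, ?_, ?_⟩
      · -- a.re ≤ t
        have hQ : ((((t : ℂ) • (1 : Matrix (Fin N) (Fin N) ℂ) - Hm)) ⊗ₖ
            (1 : Matrix (Fin 2) (Fin 2) ℂ)).PosSemidef := psd_kron hHt psd_one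
        have hQeq : (((t : ℂ) • (1 : Matrix (Fin N) (Fin N) ℂ) - Hm)) ⊗ₖ
            (1 : Matrix (Fin 2) (Fin 2) ℂ) =
            (t : ℂ) • (1 : Matrix (Fin N × Fin 2) (Fin N × Fin 2) ℂ) - P := by
          rw [sub_kron, Matrix.smul_kronecker, Matrix.one_kronecker_one]
        rw [hQeq] at hQ
        have h3 : 0 ≤ (((t : ℂ) • (1 : Matrix (Fin N × Fin 2) (Fin N × Fin 2) ℂ) - P) * τ).trace :=
          psd_trace_mul_nonneg hQ hτ.1
        have h4 : (((t : ℂ) • (1 : Matrix (Fin N × Fin 2) (Fin N × Fin 2) ℂ) - P) * τ).trace =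
            (t : ℂ) - a := by
          rw [Matrix.sub_mul, Matrix.smul_mul, one_mul, Matrix.trace_sub, Matrix.trace_smul,
            hτ.2, ← hadef, smul_eq_mul, mul_one]
        rw [h4] at h3
        have h5 := (Complex.le_def.mp h3).1
        simp [Complex.sub_re] at h5
        linarith
      · -- β ≤ a.re
        have hM : (Hm - (β : ℂ) • (1 : Matrix (Fin N) (Fin N) ℂ)).PosSemidef := by
          refine Matrix.PosSemidef.of_dotProduct_mulVec_nonneg ?_ ?_
          · refine hH.1.sub ?_
            simp [Matrix.IsHermitian, Matrix.conjTranspose_smul]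
          · intro x
            by_cases hx : x = 0
            · simp [hx]
            · set s : ℂ := star x ⬝ᵥ x with hsdef
              have hs0 : 0 ≤ s := dotProduct_star_self_nonneg x
              have hsim : s.im = 0 := ((Complex.le_def.mp hs0).2).symm
              have hsre0 : 0 ≤ s.re := by simpa using (Complex.le_def.mp hs0).1
              have hseq : s = ((s.re : ℝ) : ℂ) := by apply Complex.ext <;> simp [hsim]
              have hsne : s ≠ 0 := fun h => hx (dotProduct_star_self_eq_zero.mp (hsdef ▸ h))
              have hsrepos : 0 < s.re := by
                rcases lt_or_eq_of_le hsre0 with h | h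
                · exact h
                · exact absurd (by rw [hseq, ← h]; simp) hsne
              set qx : ℂ := star x ⬝ᵥ Hm *ᵥ x with hqxdef
              have hqx0 : 0 ≤ qx := hH.dotProduct_mulVec_nonneg x
              have hqxim : qx.im = 0 := ((Complex.le_def.mp hqx0).2).symm
              -- normalized vector
              set c : ℝ := Real.sqrt s.re with hcdef
              have hc : 0 < c := Real.sqrt_pos.mpr hsrepos
              have hc2 : c * c = s.re := Real.mul_self_sqrt hsrepos.le
              set ψ : Fin N → ℂ := ((c⁻¹ : ℝ) : ℂ) • x with hψdef
              have hstar : star ψ = ((c⁻¹ : ℝ) : ℂ) • star x := by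
                rw [hψdef, star_smul]; congr 1; simp
              have hψunit : star ψ ⬝ᵥ ψ = 1 := by
                have hr : c⁻¹ * (c⁻¹ * s.re) = 1 := by
                  field_simp
                  nlinarith [hc2]
                rw [hψdef, hstar, smul_dotProduct, dotProduct_smul, ← hsdef,
                  hseq, smul_eq_mul, smul_eq_mul]
                exact_mod_cast hr
              have hψq : star ψ ⬝ᵥ Hm *ᵥ ψ = (((c⁻¹ * c⁻¹ : ℝ)) : ℂ) * qx := by
                rw [hψdef, hstar, Matrix.mulVec_smul, smul_dotProduct,
                  dotProduct_smul, ← hqxdef, smul_eq_mul, smul_eq_mul]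
                push_cast
                ring
              have hβψ := hβ ψ hψunit
              rw [hψq] at hβψ
              have hre : ((((c⁻¹ * c⁻¹ : ℝ)) : ℂ) * qx).re = (c⁻¹ * c⁻¹) * qx.re := by
                simp [Complex.mul_re, hqxim]
              rw [hre] at hβψ
              have hget : β * s.re ≤ qx.re := by
                have hc2' : c⁻¹ * c⁻¹ = (s.re)⁻¹ := by
                  field_simp
                  nlinarith [hc2]
                rw [hc2'] at hβψ
                calc β * s.re ≤ (s.re)⁻¹ * qx.re * s.re :=
                      mul_le_mul_of_nonneg_right hβψ hsre0
                  _ = qx.re := by field_simp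
              -- conclude
              have hval : star x ⬝ᵥ (Hm - (β : ℂ) • 1) *ᵥ x = qx - (β : ℂ) * s := by
                rw [Matrix.sub_mulVec, Matrix.smul_mulVec, Matrix.one_mulVec,
                  dotProduct_sub, dotProduct_smul, ← hqxdef, ← hsdef, smul_eq_mul]
              rw [hval, Complex.le_def]
              constructor
              · simp only [Complex.zero_re, Complex.sub_re, Complex.mul_re, Complex.ofReal_re,
                  Complex.ofReal_im, hsim]
                simp only [zero_mul, mul_zero, sub_zero]
                linarith [hget]
              · simp [Complex.sub_im, Complex.mul_im, hsim, hqxim]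
        have hMk : ((Hm - (β : ℂ) • (1 : Matrix (Fin N) (Fin N) ℂ)) ⊗ₖ
            (1 : Matrix (Fin 2) (Fin 2) ℂ)).PosSemidef := psd_kron hM psd_one
        have hMeq : (Hm - (β : ℂ) • (1 : Matrix (Fin N) (Fin N) ℂ)) ⊗ₖ
            (1 : Matrix (Fin 2) (Fin 2) ℂ) =
            P - (β : ℂ) • (1 : Matrix (Fin N × Fin 2) (Fin N × Fin 2) ℂ) := by
          rw [sub_kron, Matrix.smul_kronecker, Matrix.one_kronecker_one, hPdef]
        rw [hMeq] at hMk
        have h3 : 0 ≤ ((P - (β : ℂ) • (1 : Matrix (Fin N × Fin 2) (Fin N × Fin 2) ℂ)) * τ).trace :=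
          psd_trace_mul_nonneg hMk hτ.1
        have h4 : ((P - (β : ℂ) • (1 : Matrix (Fin N × Fin 2) (Fin N × Fin 2) ℂ)) * τ).trace =
            a - (β : ℂ) := by
          rw [Matrix.sub_mul, Matrix.smul_mul, one_mul, Matrix.trace_sub, Matrix.trace_smul,
            hτ.2, ← hadef, smul_eq_mul, mul_one]
        rw [h4] at h3
        have h5 := (Complex.le_def.mp h3).1
        simp [Complex.sub_re] at h5
        linarith
    have main : ∀ ρ σ : Matrix (Fin N × Fin 2) (Fin N × Fin 2) ℂ, IsDensity ρ → IsDensity σ →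
        ((PhiH t Hm ρ * PhiH t Hm σ).trace).re ≤ 1 - β / (2 * t) := by
      intro ρ σ hρ hσ
      obtain ⟨x, hx, hx0, hxt, hβx⟩ := key ρ hρ
      obtain ⟨y, hy, hy0, hyt, hβy⟩ := key σ hσ
      rw [phi_trace t Hm _ _ x y hx hy]
      have e : β / (2 * t) = (β / t) / 2 := by ring
      rw [e]
      exact ineq2 (β/t) (x/t) (y/t) (div_nonneg hx0 ht.le) ((div_le_one ht).mpr hxt)
        ((div_le_div_iff_of_pos_right ht).mpr hβx) (div_nonneg hy0 ht.le) ((div_le_one ht).mpr hyt)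
        ((div_le_div_iff_of_pos_right ht).mpr hβy)
    exact ⟨fun τ hτ => main τ τ hτ hτ, main⟩
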